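/- Assume ℙ(S_F) = 1. Then v_ℙ is the unique F-invariant Borel probability measure on Σ_k × M with marginal ℙ: F_* v_ℙ = v_ℙ, Π_* v_ℙ = ℙ, and every Borel probability measure μ on Σ_k × M satisfying F_* μ = μ and Π_* μ = ℙ equals v_ℙ. -/

import Mathlib

open Set Function Filter Topology MeasureTheory
open ENNReal NNReal
set_option linter.unusedSectionVars false

noncomputable section

/-- The shift map on two-sided sequences. -/
def shiftMap {k : ℕ} (θ : ℤ → Fin k) : ℤ → Fin k := fun i => θ (i + 1)

/-- The step skew product `F(θ, x) = (σ θ, f_{θ₀} x)`. -/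
def skewProd {k : ℕ} {M : Type*} (f : Fin k → M → M) :
    (ℤ → Fin k) × M → (ℤ → Fin k) × M :=
  fun p => (shiftMap p.1, f (p.1 0) p.2)

/-- Backward composition `f_{θ₋₁} ∘ ⋯ ∘ f_{θ₋ₙ}`. -/
def bcomp {k : ℕ} {M : Type*} (f : Fin k → M → M) (θ : ℤ → Fin k) : ℕ → M → M
  | 0 => id
  | n + 1 => bcomp f θ n ∘ f (θ (-((n : ℤ) + 1)))

/-- The spine `I_θ = ⋂_{n ≥ 1} f_{θ₋₁} ∘ ⋯ ∘ f_{θ₋ₙ}(M)`. -/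
def spine {k : ℕ} {M : Type*} (f : Fin k → M → M) (θ : ℤ → Fin k) : Set M :=
  ⋂ n : ℕ, bcomp f θ (n + 1) '' Set.univ

/-- The set of weakly hyperbolic sequences: those `θ` whose spine is a singleton. -/
def weakHyp {k : ℕ} {M : Type*} (f : Fin k → M → M) : Set (ℤ → Fin k) :=
  {θ | ∃ x : M, spine f θ = {x}}

/-- The ω-limit set of a point `z` under iteration of `F`: limits of subsequences
`F^{n_j}(z)` with `n_j → ∞`. -/
def omegaLim {α : Type*} [TopologicalSpace α] (F : α → α) (z : α) : Set α :=
  {w | ∃ φ : ℕ → ℕ, StrictMono φ ∧ Tendsto (fun j => F^[φ j] z) atTop (𝓝 w)}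


namespace SkewAux

variable {k : ℕ} {M : Type*} [MetricSpace M] [CompactSpace M] [Nonempty M]
variable (f : Fin k → M → M)

lemma bcomp_succ (θ : ℤ → Fin k) (n : ℕ) :
    bcomp f θ (n + 1) = bcomp f θ n ∘ f (θ (-((n : ℤ) + 1))) := rfl

lemma bcomp_cont (hf : ∀ i, Continuous (f i)) (θ : ℤ → Fin k) (n : ℕ) :
    Continuous (bcomp f θ n) := by
  induction n with
  | zero => exact continuous_id
  | succ n ih => exact ih.comp (hf _)

lemma K_compact (hf : ∀ i, Continuous (f i)) (θ : ℤ → Fin k) (n : ℕ) :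
    IsCompact (bcomp f θ n '' Set.univ) :=
  isCompact_univ.image (bcomp_cont f hf θ n)

lemma K_nonempty (θ : ℤ → Fin k) (n : ℕ) : (bcomp f θ n '' Set.univ).Nonempty :=
  Set.univ_nonempty.image _

lemma K_antitone (θ : ℤ → Fin k) : Antitone fun n => bcomp f θ n '' Set.univ := by
  apply antitone_nat_of_succ_le
  intro n
  calc bcomp f θ (n + 1) '' Set.univ
      = bcomp f θ n '' (f (θ (-((n : ℤ) + 1))) '' Set.univ) := by
        rw [bcomp_succ, Set.image_comp]
    _ ⊆ bcomp f θ n '' Set.univ := Set.image_mono (Set.subset_univ _)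

lemma spine_subset_K (θ : ℤ → Fin k) (n : ℕ) :
    spine f θ ⊆ bcomp f θ n '' Set.univ := by
  cases n with
  | zero => simp [bcomp]
  | succ n => exact Set.iInter_subset _ n

lemma bcomp_shift (θ : ℤ → Fin k) (n : ℕ) :
    bcomp f (shiftMap θ) (n + 1) = f (θ 0) ∘ bcomp f θ n := by
  induction n with
  | zero =>
    funext x
    show f (shiftMap θ (-((0 : ℤ) + 1))) x = f (θ 0) x
    have : shiftMap θ (-((0 : ℤ) + 1)) = θ 0 := by
      show θ (-((0 : ℤ) + 1) + 1) = θ 0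
      norm_num
    rw [this]
  | succ n ih =>
    funext x
    show bcomp f (shiftMap θ) (n + 1) (f (shiftMap θ (-((n : ℤ) + 1 + 1))) x)
        = f (θ 0) (bcomp f θ n (f (θ (-((n : ℤ) + 1))) x))
    have hidx : shiftMap θ (-((n : ℤ) + 1 + 1)) = θ (-((n : ℤ) + 1)) := by
      show θ (-((n : ℤ) + 1 + 1) + 1) = θ (-((n : ℤ) + 1))
      ring_nf
    rw [hidx, ih]
    rfl

lemma cont_pair (hf : ∀ i, Continuous (f i)) (m : ℤ) :
    Continuous fun p : (ℤ → Fin k) × M => f (p.1 m) p.2 := by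
  rw [continuous_iff_continuousAt]
  rintro ⟨θ, x⟩
  have hU : {q : (ℤ → Fin k) × M | q.1 m = θ m} ∈ 𝓝 ((θ, x) : (ℤ → Fin k) × M) := by
    have ho : IsOpen {q : (ℤ → Fin k) × M | q.1 m = θ m} := by
      have : {q : (ℤ → Fin k) × M | q.1 m = θ m}
          = (fun q : (ℤ → Fin k) × M => q.1 m) ⁻¹' {θ m} := rfl
      rw [this]
      exact (isOpen_discrete _).preimage ((continuous_apply m).comp continuous_fst)
    exact ho.mem_nhds rfl
  refine ContinuousAt.congr (((hf (θ m)).comp continuous_snd).continuousAt) ?_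
  filter_upwards [hU] with q hq
  rw [show q.1 m = θ m from hq]
  rfl

lemma cont_bcomp (hf : ∀ i, Continuous (f i)) (n : ℕ) :
    Continuous fun p : (ℤ → Fin k) × M => bcomp f p.1 n p.2 := by
  induction n with
  | zero => exact continuous_snd
  | succ n ih =>
    have heq : (fun p : (ℤ → Fin k) × M => bcomp f p.1 (n + 1) p.2)
        = (fun p : (ℤ → Fin k) × M => bcomp f p.1 n p.2) ∘
          (fun p : (ℤ → Fin k) × M => (p.1, f (p.1 (-((n : ℤ) + 1))) p.2)) := rfl
    rw [heq]
    exact ih.comp (continuous_fst.prodMk (cont_pair f hf _))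

lemma cont_shift : Continuous (shiftMap : (ℤ → Fin k) → (ℤ → Fin k)) :=
  continuous_pi fun i => continuous_apply (i + 1)

lemma cont_skew (hf : ∀ i, Continuous (f i)) : Continuous (skewProd f) :=
  ((cont_shift).comp continuous_fst).prodMk (cont_pair f hf 0)

lemma skew_iter (θ : ℤ → Fin k) (x : M) (n : ℕ) :
    (skewProd f)^[n] (θ, x) = (shiftMap^[n] θ, bcomp f (shiftMap^[n] θ) n x) := by
  induction n with
  | zero => rfl
  | succ n ih =>
    rw [Function.iterate_succ_apply', ih, Function.iterate_succ_apply' shiftMap]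
    show (shiftMap (shiftMap^[n] θ), f ((shiftMap^[n] θ) 0) (bcomp f (shiftMap^[n] θ) n x)) = _
    rw [bcomp_shift f (shiftMap^[n] θ) n]
    rfl

end SkewAux

namespace SkewAux

variable {k : ℕ} {M : Type*} [MetricSpace M] [CompactSpace M] [Nonempty M]
variable (f : Fin k → M → M)

lemma bcomp_congr (θ θ' : ℤ → Fin k) (n : ℕ)
    (h : ∀ j < n, θ' (-((j : ℤ) + 1)) = θ (-((j : ℤ) + 1))) :
    bcomp f θ' n = bcomp f θ n := by
  induction n with
  | zero => rfl
  | succ n ih =>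
    show bcomp f θ' n ∘ f (θ' (-((n : ℤ) + 1))) = bcomp f θ n ∘ f (θ (-((n : ℤ) + 1)))
    rw [ih (fun j hj => h j (Nat.lt_succ_of_lt hj)), h n (Nat.lt_succ_self n)]

lemma diam_meas (hf : ∀ i, Continuous (f i)) (n : ℕ) :
    Measurable fun θ : ℤ → Fin k => EMetric.diam (bcomp f θ n '' Set.univ) := by
  have hc : Continuous fun θ : ℤ → Fin k => EMetric.diam (bcomp f θ n '' Set.univ) := by
    rw [continuous_iff_continuousAt]
    intro θ
    have hCo : IsOpen {θ' : ℤ → Fin k |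
        ∀ j ∈ Finset.range n, θ' (-((j : ℤ) + 1)) = θ (-((j : ℤ) + 1))} := by
      have : {θ' : ℤ → Fin k | ∀ j ∈ Finset.range n, θ' (-((j : ℤ) + 1)) = θ (-((j : ℤ) + 1))}
          = ⋂ j ∈ Finset.range n,
              (fun θ' : ℤ → Fin k => θ' (-((j : ℤ) + 1))) ⁻¹' {θ (-((j : ℤ) + 1))} := by
        ext θ'; simp
      rw [this]
      exact isOpen_biInter_finset fun j _ =>
        (isOpen_discrete _).preimage (continuous_apply _)
    have hmem : {θ' : ℤ → Fin k |
        ∀ j ∈ Finset.range n, θ' (-((j : ℤ) + 1)) = θ (-((j : ℤ) + 1))} ∈ 𝓝 θ :=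
      hCo.mem_nhds (fun j _ => rfl)
    refine ContinuousAt.congr (continuousAt_const (y := EMetric.diam (bcomp f θ n '' Set.univ))) ?_
    filter_upwards [hmem] with θ' hθ'
    rw [bcomp_congr f θ θ' n (fun j hj => hθ' j (Finset.mem_range.mpr hj))]
  exact hc.measurable

lemma weakHyp_eq (hf : ∀ i, Continuous (f i)) :
    weakHyp f = {θ : ℤ → Fin k | (⨅ n : ℕ, EMetric.diam (bcomp f θ n '' Set.univ)) = 0} := by
  ext θ
  constructor
  · rintro ⟨x, hx⟩
    show (⨅ n : ℕ, EMetric.diam (bcomp f θ n '' Set.univ)) = 0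
    refine le_antisymm ?_ zero_le
    refine ENNReal.le_of_forall_pos_le_add fun ε hε _ => ?_
    rw [zero_add]
    have hr : (0 : ℝ≥0∞) < (ε : ℝ≥0∞) / 2 :=
      ENNReal.div_pos (by exact_mod_cast hε.ne') (by norm_num)
    -- find n with K n ⊆ ball x (ε/2)
    have hsub : ∃ n : ℕ, bcomp f θ n '' Set.univ ⊆ EMetric.ball x ((ε : ℝ≥0∞) / 2) := by
      by_contra hcon
      push_neg at hcon
      have hne : ∀ n : ℕ,
          ((bcomp f θ n '' Set.univ) ∩ (EMetric.ball x ((ε : ℝ≥0∞) / 2))ᶜ).Nonempty := by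
        intro n
        obtain ⟨y, hy, hy2⟩ := Set.not_subset.mp (hcon n)
        exact ⟨y, hy, hy2⟩
      have hZ := IsCompact.nonempty_iInter_of_directed_nonempty_isCompact_isClosed
        (fun n : ℕ => (bcomp f θ n '' Set.univ) ∩ (EMetric.ball x ((ε : ℝ≥0∞) / 2))ᶜ)
        (fun n m => ⟨max n m,
          Set.inter_subset_inter_left _ (K_antitone f θ (le_max_left n m)),
          Set.inter_subset_inter_left _ (K_antitone f θ (le_max_right n m))⟩)
        hne
        (fun n => ((K_compact f hf θ n).inter_right EMetric.isOpen_ball.isClosed_compl))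
        (fun n => ((K_compact f hf θ n).isClosed).inter EMetric.isOpen_ball.isClosed_compl)
      obtain ⟨z, hz⟩ := hZ
      simp only [Set.mem_iInter, Set.mem_inter_iff] at hz
      have hzs : z ∈ spine f θ := Set.mem_iInter.mpr fun n => (hz (n + 1)).1
      rw [hx] at hzs
      rw [hzs] at hz
      exact (hz 0).2 (EMetric.mem_ball_self hr)
    obtain ⟨n, hn⟩ := hsub
    calc (⨅ m : ℕ, EMetric.diam (bcomp f θ m '' Set.univ))
        ≤ EMetric.diam (bcomp f θ n '' Set.univ) := iInf_le _ n
      _ ≤ EMetric.diam (EMetric.ball x ((ε : ℝ≥0∞) / 2)) := EMetric.diam_mono hn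
      _ ≤ 2 * ((ε : ℝ≥0∞) / 2) := EMetric.diam_ball
      _ = (ε : ℝ≥0∞) := ENNReal.mul_div_cancel (by norm_num) (by norm_num)
  · intro hθ
    show ∃ x : M, spine f θ = {x}
    have hne : (spine f θ).Nonempty := by
      apply IsCompact.nonempty_iInter_of_directed_nonempty_isCompact_isClosed
        (fun n : ℕ => bcomp f θ (n + 1) '' Set.univ)
        (fun n m => ⟨max n m,
          K_antitone f θ (Nat.succ_le_succ (le_max_left n m)),
          K_antitone f θ (Nat.succ_le_succ (le_max_right n m))⟩)
        (fun n => K_nonempty f θ (n + 1))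
        (fun n => K_compact f hf θ (n + 1))
        (fun n => (K_compact f hf θ (n + 1)).isClosed)
    have hdiam : EMetric.diam (spine f θ) = 0 := by
      refine le_antisymm ?_ zero_le
      have h0 : (⨅ n : ℕ, EMetric.diam (bcomp f θ n '' Set.univ)) = 0 := hθ
      rw [← h0]
      exact le_iInf fun n => EMetric.diam_mono (spine_subset_K f θ n)
    obtain ⟨x, hx⟩ := hne
    exact ⟨x, (EMetric.diam_eq_zero_iff.mp hdiam).eq_singleton_of_mem hx⟩

lemma weakHyp_meas (hf : ∀ i, Continuous (f i)) : MeasurableSet (weakHyp f) := by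
  rw [weakHyp_eq f hf]
  exact (Measurable.iInf fun n => diam_meas f hf n) (measurableSet_singleton 0)

end SkewAux

namespace SkewAux

variable {k : ℕ} {M : Type*} [MetricSpace M] [CompactSpace M] [Nonempty M]
  [MeasurableSpace M] [BorelSpace M]
variable (f : Fin k → M → M)

/-- The set `E n = {(θ,x) | x ∈ K_n(θ)}`. -/
def Eset (n : ℕ) : Set ((ℤ → Fin k) × M) :=
  {p : (ℤ → Fin k) × M | p.2 ∈ bcomp f p.1 n '' Set.univ}

lemma Eset_closed (hf : ∀ i, Continuous (f i)) (n : ℕ) : IsClosed (Eset f n) := by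
  have himg : Eset f n
      = (fun p : (ℤ → Fin k) × M => (p.1, bcomp f p.1 n p.2)) '' Set.univ := by
    ext ⟨θ, x⟩
    constructor
    · rintro ⟨y, -, hy⟩
      exact ⟨(θ, y), Set.mem_univ _, by simp [hy]⟩
    · rintro ⟨⟨θ', y⟩, -, heq⟩
      obtain ⟨h1, h2⟩ := Prod.mk.injEq _ _ _ _ ▸ heq
      subst h1
      exact ⟨y, Set.mem_univ _, h2⟩
  rw [himg]
  exact (isCompact_univ.image
    (continuous_fst.prodMk (cont_bcomp f hf n))).isClosed

lemma Eset_meas (hf : ∀ i, Continuous (f i)) (n : ℕ) : MeasurableSet (Eset f n) :=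
  (Eset_closed f hf n).measurableSet

lemma iter_preimage_Eset (n : ℕ) : (skewProd f)^[n] ⁻¹' (Eset f n) = Set.univ := by
  ext ⟨θ, x⟩
  simp only [Set.mem_preimage, Set.mem_univ, iff_true]
  rw [skew_iter f θ x n]
  exact Set.mem_image_of_mem _ (Set.mem_univ x)

/-- Key lemma: any probability measure with marginal `ℙ` giving full mass to every
`Eset n` equals `map ρ̂ ℙ`. -/
lemma key (hf : ∀ i, Continuous (f i))
    (ℙ : Measure (ℤ → Fin k)) [IsProbabilityMeasure ℙ]
    (hS : ℙ (weakHyp f) = 1)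
    (ρ : (ℤ → Fin k) → M) (hρ : ∀ θ ∈ weakHyp f, spine f θ = {ρ θ})
    (hρm : AEMeasurable (fun θ => (θ, ρ θ) : (ℤ → Fin k) → (ℤ → Fin k) × M) ℙ)
    (ν : Measure ((ℤ → Fin k) × M)) [IsProbabilityMeasure ν]
    (hmarg : Measure.map Prod.fst ν = ℙ)
    (hE : ∀ n, ν (Eset f n) = 1) :
    ν = Measure.map (fun θ => (θ, ρ θ)) ℙ := by
  have hWm : MeasurableSet (weakHyp f) := weakHyp_meas f hf
  -- the graph set has full ν-measure
  have hEc : ∀ n, ν (Eset f n)ᶜ = 0 := by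
    intro n
    rw [measure_compl (Eset_meas f hf n) (measure_ne_top ν _), hE n, measure_univ]
    simp
  have hWc : ν (Prod.fst ⁻¹' (weakHyp f))ᶜ = 0 := by
    have h1 : ν (Prod.fst ⁻¹' (weakHyp f)) = 1 := by
      rw [← Measure.map_apply measurable_fst hWm, hmarg, hS]
    rw [measure_compl (measurable_fst hWm) (measure_ne_top ν _), h1, measure_univ]
    simp
  have hae : (fun p : (ℤ → Fin k) × M => ((p.1, ρ p.1) : (ℤ → Fin k) × M)) =ᵐ[ν] id := by
    have hmem : ((⋂ n, Eset f n) ∩ Prod.fst ⁻¹' (weakHyp f)) ∈ ae ν := by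
      rw [mem_ae_iff, Set.compl_inter, Set.compl_iInter]
      exact measure_union_null (measure_iUnion_null hEc) hWc
    filter_upwards [hmem] with p hp
    obtain ⟨hpE, hpW⟩ := hp
    have hspine : p.2 ∈ spine f p.1 := by
      refine Set.mem_iInter.mpr fun n => ?_
      exact Set.mem_iInter.mp hpE (n + 1)
    rw [hρ p.1 hpW] at hspine
    simp only [Set.mem_singleton_iff] at hspine
    show (p.1, ρ p.1) = p
    rw [← hspine]
  have hcomp : AEMeasurable
      ((fun θ => (θ, ρ θ) : (ℤ → Fin k) → (ℤ → Fin k) × M) ∘ Prod.fst) ν := by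
    refine AEMeasurable.comp_aemeasurable ?_ measurable_fst.aemeasurable
    rw [hmarg]; exact hρm
  calc ν = Measure.map id ν := (Measure.map_id).symm
    _ = Measure.map ((fun θ => (θ, ρ θ)) ∘ Prod.fst) ν := (Measure.map_congr hae).symm
    _ = Measure.map (fun θ => (θ, ρ θ)) (Measure.map Prod.fst ν) :=
        (AEMeasurable.map_map_of_aemeasurable
          (by rw [hmarg]; exact hρm) measurable_fst.aemeasurable).symm
    _ = Measure.map (fun θ => (θ, ρ θ)) ℙ := by rw [hmarg]

end SkewAux

/-- If `ℙ(S_F) = 1`, then `v_ℙ = ρ̂_* ℙ` is the unique `F`-invariant Borel probability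
measure on `Σ_k × M` with marginal `ℙ`. -/
theorem attracting_measure_unique_invariant
    {k : ℕ} (hk : 1 ≤ k) {M : Type*} [MetricSpace M] [CompactSpace M] [Nonempty M]
    [MeasurableSpace M] [BorelSpace M]
    (f : Fin k → M → M) (hf : ∀ i, Continuous (f i))
    (ℙ : Measure (ℤ → Fin k)) [IsProbabilityMeasure ℙ]
    (hinv : Measure.map shiftMap ℙ = ℙ)
    (hS : ℙ (weakHyp f) = 1)
    (ρ : (ℤ → Fin k) → M) (hρ : ∀ θ ∈ weakHyp f, spine f θ = {ρ θ})
    (hρm : AEMeasurable (fun θ => (θ, ρ θ) : (ℤ → Fin k) → (ℤ → Fin k) × M) ℙ) :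
    Measure.map (skewProd f) (Measure.map (fun θ => (θ, ρ θ)) ℙ) =
        Measure.map (fun θ => (θ, ρ θ)) ℙ ∧
      Measure.map Prod.fst (Measure.map (fun θ => (θ, ρ θ)) ℙ) = ℙ ∧
      ∀ μ : Measure ((ℤ → Fin k) × M), IsProbabilityMeasure μ →
        Measure.map (skewProd f) μ = μ → Measure.map Prod.fst μ = ℙ →
        μ = Measure.map (fun θ => (θ, ρ θ)) ℙ := by
  have hF : Measurable (skewProd f) := (SkewAux.cont_skew f hf).measurable
  have hσ : Measurable (shiftMap : (ℤ → Fin k) → ℤ → Fin k) :=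
    SkewAux.cont_shift.measurable
  haveI hv : IsProbabilityMeasure (Measure.map (fun θ => (θ, ρ θ)) ℙ) :=
    Measure.isProbabilityMeasure_map hρm
  -- marginal of v is ℙ
  have h2 : Measure.map Prod.fst (Measure.map (fun θ => (θ, ρ θ)) ℙ) = ℙ := by
    rw [AEMeasurable.map_map_of_aemeasurable measurable_fst.aemeasurable hρm]
    have : (Prod.fst ∘ fun θ : ℤ → Fin k => ((θ, ρ θ) : (ℤ → Fin k) × M)) = id := rfl
    rw [this, Measure.map_id]
  -- F_* v has marginal ℙ
  have hmargν : Measure.map Prod.fst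
      (Measure.map (skewProd f) (Measure.map (fun θ => (θ, ρ θ)) ℙ)) = ℙ := by
    rw [Measure.map_map measurable_fst hF]
    have : (Prod.fst ∘ skewProd f)
        = (shiftMap ∘ Prod.fst : (ℤ → Fin k) × M → ℤ → Fin k) := rfl
    rw [this, ← Measure.map_map hσ measurable_fst, h2, hinv]
  -- F_* v gives full mass to each Eset n
  have hEν : ∀ n, (Measure.map (skewProd f) (Measure.map (fun θ => (θ, ρ θ)) ℙ))
      (SkewAux.Eset f n) = 1 := by
    intro n
    rw [Measure.map_apply hF (SkewAux.Eset_meas f hf n),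
      Measure.map_apply_of_aemeasurable hρm (hF (SkewAux.Eset_meas f hf n))]
    refine le_antisymm prob_le_one ?_
    rw [← hS]
    apply measure_mono
    intro θ hθ
    show skewProd f (θ, ρ θ) ∈ SkewAux.Eset f n
    show f (θ 0) (ρ θ) ∈ bcomp f (shiftMap θ) n '' Set.univ
    cases n with
    | zero => exact ⟨f (θ 0) (ρ θ), Set.mem_univ _, rfl⟩
    | succ m =>
      rw [SkewAux.bcomp_shift f θ m, Set.image_comp]
      refine Set.mem_image_of_mem _ ?_
      have hmem : ρ θ ∈ spine f θ := by
        rw [hρ θ hθ]; exact Set.mem_singleton _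
      exact SkewAux.spine_subset_K f θ m hmem
  haveI : IsProbabilityMeasure
      (Measure.map (skewProd f) (Measure.map (fun θ => (θ, ρ θ)) ℙ)) :=
    Measure.isProbabilityMeasure_map hF.aemeasurable
  have h1 : Measure.map (skewProd f) (Measure.map (fun θ => (θ, ρ θ)) ℙ)
      = Measure.map (fun θ => (θ, ρ θ)) ℙ :=
    SkewAux.key f hf ℙ hS ρ hρ hρm _ hmargν hEν
  refine ⟨h1, h2, ?_⟩
  intro μ hμprob hμinv hμmarg
  haveI := hμprob
  have hiter : ∀ n, Measure.map ((skewProd f)^[n]) μ = μ := by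
    intro n
    induction n with
    | zero => rw [Function.iterate_zero, Measure.map_id]
    | succ n ih =>
      rw [Function.iterate_succ', ← Measure.map_map hF (hF.iterate n), ih, hμinv]
  have hEμ : ∀ n, μ (SkewAux.Eset f n) = 1 := by
    intro n
    conv_lhs => rw [← hiter n]
    rw [Measure.map_apply (hF.iterate n) (SkewAux.Eset_meas f hf n),
      SkewAux.iter_preimage_Eset f n, measure_univ]
  exact SkewAux.key f hf ℙ hS ρ hρ hρm μ hμmarg hEμ
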